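/- For any real numbers 0 < p ≤ q < ∞ and any doubly indexed family of complex numbers (c_{ij})_{i,j=1}^∞ (with the relevant sums possibly infinite), one has (Σ_{i=1}^∞ (Σ_{j=1}^∞ |c_{ij}|^p)^{q/p})^{1/q} ≤ (Σ_{j=1}^∞ (Σ_{i=1}^∞ |c_{ij}|^q)^{p/q})^{1/p}. -/

import Mathlib

open scoped ENNReal NNReal
open Finset

private lemma minkowski_aux_finset {r : ℝ} (hr : 1 ≤ r) (a : ℕ → ℕ → ℝ≥0∞)
    (t s : Finset ℕ) :
    (∑ i ∈ t, (∑ j ∈ s, a i j) ^ r) ^ (1 / r) ≤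
      ∑ j ∈ s, (∑ i ∈ t, a i j ^ r) ^ (1 / r) := by
  have hr0 : 0 < r := lt_of_lt_of_le one_pos hr
  induction s using Finset.induction with
  | empty =>
      simp [ENNReal.zero_rpow_of_pos hr0,
        ENNReal.zero_rpow_of_pos (by positivity : (0:ℝ) < 1 / r), hr0]
  | @insert j s hj ih =>
      simp only [Finset.sum_insert hj]
      calc (∑ i ∈ t, (a i j + ∑ j' ∈ s, a i j') ^ r) ^ (1 / r)
          ≤ (∑ i ∈ t, a i j ^ r) ^ (1 / r) +
            (∑ i ∈ t, (∑ j' ∈ s, a i j') ^ r) ^ (1 / r) :=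
            ENNReal.Lp_add_le t _ _ hr
        _ ≤ (∑ i ∈ t, a i j ^ r) ^ (1 / r) +
            ∑ j' ∈ s, (∑ i ∈ t, a i j' ^ r) ^ (1 / r) := add_le_add le_rfl ih

private lemma minkowski_aux_tsum {r : ℝ} (hr : 1 ≤ r) (a : ℕ → ℕ → ℝ≥0∞) :
    (∑' i : ℕ, (∑' j : ℕ, a i j) ^ r) ^ (1 / r) ≤
      ∑' j : ℕ, (∑' i : ℕ, a i j ^ r) ^ (1 / r) := by
  have hr0 : 0 < r := lt_of_lt_of_le one_pos hr
  set R : ℝ≥0∞ := ∑' j : ℕ, (∑' i : ℕ, a i j ^ r) ^ (1 / r) with hR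
  have key : (∑' i : ℕ, (∑' j : ℕ, a i j) ^ r) ≤ R ^ r := by
    rw [ENNReal.tsum_eq_iSup_sum]
    refine iSup_le fun t => ?_
    -- for each n, bound the truncated sum
    have hbound : ∀ n : ℕ, ∑ i ∈ t, (∑ j ∈ Finset.range n, a i j) ^ r ≤ R ^ r := by
      intro n
      have h1 := minkowski_aux_finset hr a t (Finset.range n)
      have h2 : ∑ j ∈ Finset.range n, (∑ i ∈ t, a i j ^ r) ^ (1 / r) ≤ R := by
        refine le_trans (Finset.sum_le_sum fun j _ => ?_)
          (ENNReal.sum_le_tsum _)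
        exact ENNReal.rpow_le_rpow (ENNReal.sum_le_tsum _) (by positivity)
      have h3 := ENNReal.rpow_le_rpow (h1.trans h2) hr0.le
      rwa [← ENNReal.rpow_mul, one_div_mul_cancel hr0.ne', ENNReal.rpow_one] at h3
    have htend : Filter.Tendsto (fun n => ∑ i ∈ t, (∑ j ∈ Finset.range n, a i j) ^ r)
        Filter.atTop (nhds (∑ i ∈ t, (∑' j : ℕ, a i j) ^ r)) := by
      refine tendsto_finset_sum t fun i _ => ?_
      exact (ENNReal.continuous_rpow_const.tendsto _).comp (ENNReal.tendsto_nat_tsum _)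
    exact le_of_tendsto htend (Filter.Eventually.of_forall hbound)
  calc (∑' i : ℕ, (∑' j : ℕ, a i j) ^ r) ^ (1 / r)
      ≤ (R ^ r) ^ (1 / r) := ENNReal.rpow_le_rpow key (by positivity)
    _ = R := by rw [← ENNReal.rpow_mul, mul_one_div_cancel hr0.ne', ENNReal.rpow_one]

/-- **A corollary of Minkowski's inequality.** For real numbers `0 < p ≤ q < ∞` and any doubly
indexed family of complex numbers `(c_{ij})`, interpreted in the extended nonnegative reals,
`(Σ_i (Σ_j |c_{ij}|^p)^{q/p})^{1/q} ≤ (Σ_j (Σ_i |c_{ij}|^q)^{p/q})^{1/p}`. -/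
theorem minkowski_corollary (p q : ℝ) (hp : 0 < p) (hpq : p ≤ q) (c : ℕ → ℕ → ℂ) :
    (∑' i : ℕ, (∑' j : ℕ, (‖c i j‖₊ : ℝ≥0∞) ^ p) ^ (q / p)) ^ (1 / q) ≤
      (∑' j : ℕ, (∑' i : ℕ, (‖c i j‖₊ : ℝ≥0∞) ^ q) ^ (p / q)) ^ (1 / p) := by
  have hq : 0 < q := lt_of_lt_of_le hp hpq
  set r : ℝ := q / p with hr
  have hr1 : 1 ≤ r := (one_le_div hp).mpr hpq
  have hr0 : 0 < r := lt_of_lt_of_le one_pos hr1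
  set a : ℕ → ℕ → ℝ≥0∞ := fun i j => (‖c i j‖₊ : ℝ≥0∞) ^ p with ha
  have key := minkowski_aux_tsum hr1 a
  have har : ∀ i j, a i j ^ r = (‖c i j‖₊ : ℝ≥0∞) ^ q := by
    intro i j
    rw [ha, ← ENNReal.rpow_mul, mul_div_cancel₀ q hp.ne']
  have hpr : p / q = 1 / r := by
    rw [hr, one_div_div]
  have hLHS : (∑' i : ℕ, (∑' j : ℕ, (‖c i j‖₊ : ℝ≥0∞) ^ p) ^ (q / p)) ^ (1 / q) =
      (((∑' i : ℕ, (∑' j : ℕ, a i j) ^ r) ^ (1 / r)) ^ (1 / p)) := by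
    rw [← ENNReal.rpow_mul]
    congr 1
    rw [hr]
    field_simp
  have hRHS : (∑' j : ℕ, (∑' i : ℕ, (‖c i j‖₊ : ℝ≥0∞) ^ q) ^ (p / q)) ^ (1 / p) =
      ((∑' j : ℕ, (∑' i : ℕ, a i j ^ r) ^ (1 / r)) ^ (1 / p)) := by
    congr 1
    refine tsum_congr fun j => ?_
    rw [hpr]
    congr 1
    exact tsum_congr fun i => (har i j).symm
  rw [hLHS, hRHS]
  exact ENNReal.rpow_le_rpow key (by positivity)
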